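/- Let Φ: D₁ → D₂ be a C¹ diffeomorphism between open subsets of ℝ^d and F: D₂ → ℝ^d a measurable vector field. Then the Filippov set-valued maps satisfy K[F ∘ Φ](x) = K[F](Φ(x)) for every x ∈ D₁. -/

import Mathlib

open MeasureTheory

/-- The Filippov set-valued map of a vector field `F` on a domain `D ⊆ ℝ^d`:
`K[F](x) := ⋂_{δ>0} ⋂_{|N|=0} cl conv F((B_δ(x) ∩ D) \ N)`, the intersection running
over Lebesgue-negligible sets `N`. -/
noncomputable def Filippov {d : ℕ} (D : Set (EuclideanSpace ℝ (Fin d)))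
    (F : EuclideanSpace ℝ (Fin d) → EuclideanSpace ℝ (Fin d))
    (x : EuclideanSpace ℝ (Fin d)) : Set (EuclideanSpace ℝ (Fin d)) :=
  ⋂ (δ : ℝ) (_ : 0 < δ), ⋂ (N : Set (EuclideanSpace ℝ (Fin d))) (_ : volume N = 0),
    closure (convexHull ℝ (F '' ((Metric.ball x δ ∩ D) \ N)))

/-- A `C¹` map on a set sends null sets to null sets. -/
lemma aux_image_null {d : ℕ} {U : Set (EuclideanSpace ℝ (Fin d))}
    {G : EuclideanSpace ℝ (Fin d) → EuclideanSpace ℝ (Fin d)}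
    (hG : ContDiffOn ℝ 1 G U) {N : Set (EuclideanSpace ℝ (Fin d))}
    (hN : volume N = 0) : volume (G '' (N ∩ U)) = 0 :=
  addHaar_image_eq_zero_of_differentiableOn_of_addHaar_eq_zero volume
    ((hG.differentiableOn one_ne_zero).mono Set.inter_subset_right)
    (le_antisymm ((measure_mono Set.inter_subset_left).trans hN.le) zero_le)

/-- If `Φ : D₁ → D₂` is a `C¹` diffeomorphism between open subsets of `ℝ^d` (with `C¹`
inverse `Ψ`) and `F : D₂ → ℝ^d` is a measurable vector field, then the Filippov
set-valued maps satisfy `K[F ∘ Φ](x) = K[F](Φ(x))` for every `x ∈ D₁`. -/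
theorem stmt7 {d : ℕ} (D₁ D₂ : Set (EuclideanSpace ℝ (Fin d)))
    (hD₁ : IsOpen D₁) (hD₂ : IsOpen D₂)
    (Φ Ψ : EuclideanSpace ℝ (Fin d) → EuclideanSpace ℝ (Fin d))
    (hΦ : ContDiffOn ℝ 1 Φ D₁) (hΨ : ContDiffOn ℝ 1 Ψ D₂)
    (hmaps : Set.MapsTo Φ D₁ D₂) (hmaps' : Set.MapsTo Ψ D₂ D₁)
    (hinv : ∀ x ∈ D₁, Ψ (Φ x) = x) (hinv' : ∀ y ∈ D₂, Φ (Ψ y) = y)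
    (F : EuclideanSpace ℝ (Fin d) → EuclideanSpace ℝ (Fin d)) (hF : Measurable F) :
    ∀ x ∈ D₁, Filippov D₁ (F ∘ Φ) x = Filippov D₂ F (Φ x) := by
  intro x hx
  have hΦx : Φ x ∈ D₂ := hmaps hx
  ext z
  simp only [Filippov, Set.mem_iInter]
  constructor
  · intro h δ hδ N hN
    -- continuity of Φ at x
    have hc : ContinuousAt Φ x :=
      (hΦ.continuousOn x hx).continuousAt (hD₁.mem_nhds hx)
    obtain ⟨δ', hδ', hball⟩ := Metric.continuousAt_iff.mp hc δ hδ
    have hN' : volume (Ψ '' (N ∩ D₂)) = 0 := aux_image_null hΨ hN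
    have key := h δ' hδ' (Ψ '' (N ∩ D₂)) hN'
    refine closure_mono (convexHull_mono ?_) key
    rw [Set.image_comp]
    refine Set.image_mono ?_
    rintro _ ⟨y, ⟨⟨hyb, hyD⟩, hyN⟩, rfl⟩
    refine ⟨⟨?_, hmaps hyD⟩, ?_⟩
    · exact hball hyb
    · intro hmem
      exact hyN ⟨Φ y, ⟨hmem, hmaps hyD⟩, hinv y hyD⟩
  · intro h δ hδ N hN
    have hc : ContinuousAt Ψ (Φ x) :=
      (hΨ.continuousOn _ hΦx).continuousAt (hD₂.mem_nhds hΦx)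
    obtain ⟨δ', hδ', hball⟩ := Metric.continuousAt_iff.mp hc δ hδ
    have hN' : volume (Φ '' (N ∩ D₁)) = 0 := aux_image_null hΦ hN
    have key := h δ' hδ' (Φ '' (N ∩ D₁)) hN'
    refine closure_mono (convexHull_mono ?_) key
    have hsub : (Metric.ball (Φ x) δ' ∩ D₂) \ Φ '' (N ∩ D₁) ⊆
        Φ '' ((Metric.ball x δ ∩ D₁) \ N) := by
      rintro y ⟨⟨hyb, hyD⟩, hyN⟩
      refine ⟨Ψ y, ⟨⟨?_, hmaps' hyD⟩, ?_⟩, hinv' y hyD⟩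
      · have := hball hyb
        rwa [hinv x hx] at this
      · intro hmem
        exact hyN ⟨Ψ y, ⟨hmem, hmaps' hyD⟩, hinv' y hyD⟩
    calc F '' ((Metric.ball (Φ x) δ' ∩ D₂) \ Φ '' (N ∩ D₁))
        ⊆ F '' (Φ '' ((Metric.ball x δ ∩ D₁) \ N)) := Set.image_mono hsub
      _ = (F ∘ Φ) '' ((Metric.ball x δ ∩ D₁) \ N) := (Set.image_comp F Φ _).symm
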